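/- arXiv:2401.14298 — 2 statements merged into one kernel-verified Lean document; each statement's English description precedes it below -/
import Mathlib

section
/- Let μ be a Haar measure on the locally compact additive group ℚ_p normalized so that μ(ℤ_p) = 1, and let α ∈ {-v, p, p/u}. Then for every integer k ≤ 0, the integral of the function σ ↦ 1/|1 + α·σ²|_p over the disc D_k(0) = {σ ∈ ℚ_p : |σ|_p ≤ p^k} equals p^k. -/
open MeasureTheory

/-- The Borel σ-algebra on `ℚ_p`. -/
noncomputable instance Qp.measurableSpace (p : ℕ) [Fact p.Prime] :
    MeasurableSpace ℚ_[p] := borel _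

instance Qp.borelSpace (p : ℕ) [Fact p.Prime] : BorelSpace ℚ_[p] := ⟨rfl⟩


lemma toZMod_eq_zero_iff {p : ℕ} [Fact p.Prime] (x : ℤ_[p]) :
    PadicInt.toZMod x = 0 ↔ ‖x‖ < 1 := by
  rw [← RingHom.mem_ker, PadicInt.ker_toZMod, PadicInt.maximalIdeal_eq_span_p,
    Ideal.mem_span_singleton, ← PadicInt.norm_lt_one_iff_dvd]

lemma sq_lift {p : ℕ} [Fact p.Prime] (hp2 : 2 < p) (u : ℤ_[p]) (hu : ‖u‖ = 1)
    (h : IsSquare (PadicInt.toZMod u)) : ∃ z : ℤ_[p], z ^ 2 = u := by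
  obtain ⟨w, hw⟩ := h
  set a : ℤ_[p] := (w.val : ℤ_[p]) with ha
  have hta : PadicInt.toZMod a = w := by
    rw [ha, map_natCast]
    exact ZMod.natCast_rightInverse w
  have hu0 : PadicInt.toZMod u ≠ 0 := by
    intro h; rw [toZMod_eq_zero_iff, hu] at h; exact lt_irrefl 1 h
  have hw0 : w ≠ 0 := by rintro rfl; exact hu0 (by rw [hw, mul_zero])
  have hna : ‖a‖ = 1 := by
    have h1 : ¬ ‖a‖ < 1 := by rw [← toZMod_eq_zero_iff, hta]; exact hw0
    exact le_antisymm a.norm_le_one (not_lt.mp h1)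
  have h2 : ‖(2 : ℤ_[p])‖ = 1 := by
    have : ¬ ‖((2:ℤ) : ℤ_[p])‖ < 1 := by
      rw [PadicInt.norm_int_lt_one_iff_dvd]
      intro hd
      have := Int.le_of_dvd (by norm_num) hd
      omega
    push_cast at this
    exact le_antisymm (PadicInt.norm_le_one _) (not_lt.mp this)
  set F : Polynomial ℤ_[p] := Polynomial.X ^ 2 - Polynomial.C u with hF
  have hFa : F.eval a = a ^ 2 - u := by simp [hF]
  have hFd : F.derivative = Polynomial.C 2 * Polynomial.X := by
    simp [hF]
    rw [one_add_one_eq_two, ← map_ofNat Polynomial.C 2]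
  have hFda : F.derivative.eval a = 2 * a := by simp [hFd]
  have hlt : ‖F.eval a‖ < ‖F.derivative.eval a‖ ^ 2 := by
    rw [hFa, hFda, norm_mul, h2, hna]
    norm_num
    rw [← toZMod_eq_zero_iff]
    simp [map_pow, hta, ← hw, sq]
  obtain ⟨z, hz, -⟩ := hensels_lemma hlt
  rw [hF] at hz
  simp only [Polynomial.coe_aeval_eq_eval, Polynomial.eval_sub, Polynomial.eval_pow, Polynomial.eval_X, Polynomial.eval_C,
    sub_eq_zero] at hz
  exact ⟨z, hz⟩

lemma norm_one_add_of_lt {p : ℕ} [Fact p.Prime] {x : ℚ_[p]} (h : ‖x‖ < 1) :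
    ‖1 + x‖ = 1 := by
  have h1 : ‖(1 : ℚ_[p])‖ = 1 := norm_one
  rw [Padic.add_eq_max_of_ne (by rw [h1]; exact h.ne'), h1]
  exact max_eq_left h.le

lemma norm_one_aux {p : ℕ} [Fact p.Prime] (hp2 : 2 < p)
    (u : ℤ_[p]) (hu : ‖u‖ = 1) (husq : ¬ ∃ y : ℚ_[p], y ^ 2 = (u : ℚ_[p]))
    (v : ℤ_[p]) (hv3 : p % 4 = 3 → v = -1) (hv1 : p % 4 = 1 → v = -u)
    (α : ℚ_[p])
    (hα : α ∈ ({-(v : ℚ_[p]), (p : ℚ_[p]), (p : ℚ_[p]) / (u : ℚ_[p])} : Set ℚ_[p]))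
    (σ : ℚ_[p]) (hσ : ‖σ‖ ≤ 1) : ‖1 + α * σ ^ 2‖ = 1 := by
  have hp1 : (1 : ℝ) < p := by exact_mod_cast (Fact.out : p.Prime).one_lt
  have hpinv : (p : ℝ)⁻¹ < 1 := inv_lt_one_of_one_lt₀ hp1
  have hnu : ‖(u : ℚ_[p])‖ = 1 := by rw [PadicInt.padic_norm_e_of_padicInt]; exact hu
  have hσ2 : ‖σ ^ 2‖ ≤ 1 := by
    rw [norm_pow]; exact pow_le_one₀ (norm_nonneg _) hσ
  rcases hα with h | h | h
  · -- α = -v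
    subst h
    set s : ℤ_[p] := ⟨σ, hσ⟩ with hs
    have hcoe : (s : ℚ_[p]) = σ := rfl
    have hmod : p % 4 = 1 ∨ p % 4 = 3 := by
      have hodd : p % 2 = 1 :=
        Nat.odd_iff.mp ((Fact.out : p.Prime).odd_of_ne_two (by omega))
      omega
    have hcast : 1 + -(v:ℚ_[p]) * σ ^ 2 = ((1 + (-v) * s ^ 2 : ℤ_[p]) : ℚ_[p]) := by
      push_cast [hcoe]; ring
    rw [hcast, PadicInt.padic_norm_e_of_padicInt]
    set t : ℤ_[p] := 1 + (-v) * s ^ 2 with ht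
    refine le_antisymm t.norm_le_one (not_lt.mp fun hlt => ?_)
    rw [← toZMod_eq_zero_iff] at hlt
    have hres : (1 : ZMod p) + (-(PadicInt.toZMod v)) * (PadicInt.toZMod s) ^ 2 = 0 := by
      simpa [ht, map_add, map_mul, map_pow, map_neg, map_one] using hlt
    rcases hmod with h1 | h3
    · -- p % 4 = 1, v = -u
      rw [hv1 h1, map_neg, neg_neg] at hres
      have hsne : PadicInt.toZMod s ≠ 0 := by
        intro h0
        rw [h0] at hres
        simp at hres
      have hneg1 : IsSquare (-1 : ZMod p) :=
        ZMod.exists_sq_eq_neg_one_iff.mpr (by omega)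
      obtain ⟨t₀, ht₀⟩ := hneg1
      have husq' : IsSquare (PadicInt.toZMod u) := by
        refine ⟨t₀ / PadicInt.toZMod s, ?_⟩
        rw [div_mul_div_comm, ← ht₀, eq_div_iff (mul_ne_zero hsne hsne)]
        linear_combination hres
      obtain ⟨z, hz⟩ := sq_lift hp2 u hu husq'
      exact husq ⟨(z : ℚ_[p]), by exact_mod_cast congrArg (Subtype.val) hz⟩
    · -- p % 4 = 3, v = -1
      rw [hv3 h3] at hres
      simp only [map_neg, map_one, neg_neg] at hres
      have hsq : IsSquare (-1 : ZMod p) := by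
        refine ⟨PadicInt.toZMod s, ?_⟩
        linear_combination -hres
      rw [ZMod.exists_sq_eq_neg_one_iff] at hsq
      exact hsq h3
  · subst h
    apply norm_one_add_of_lt
    rw [norm_mul, Padic.norm_p]
    calc (p:ℝ)⁻¹ * ‖σ^2‖ ≤ (p:ℝ)⁻¹ * 1 := by
          exact mul_le_mul_of_nonneg_left hσ2 (by positivity)
      _ < 1 := by rwa [mul_one]
  · subst h
    apply norm_one_add_of_lt
    rw [norm_mul, norm_div, Padic.norm_p, hnu, div_one]
    calc (p:ℝ)⁻¹ * ‖σ^2‖ ≤ (p:ℝ)⁻¹ * 1 := by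
          exact mul_le_mul_of_nonneg_left hσ2 (by positivity)
      _ < 1 := by rwa [mul_one]


lemma ball_meas {p : ℕ} [Fact p.Prime] (r : ℝ) :
    MeasurableSet {x : ℚ_[p] | ‖x‖ ≤ r} :=
  (isClosed_le continuous_norm continuous_const).measurableSet

lemma ball_cover {p : ℕ} [Fact p.Prime] (n : ℕ) :
    {x : ℚ_[p] | ‖x‖ ≤ (p : ℝ) ^ (-(n : ℤ))} =
      ⋃ j ∈ Finset.range p,
        (fun x => (-((j : ℚ_[p]) * (p : ℚ_[p]) ^ n)) + x) ⁻¹'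
          {x : ℚ_[p] | ‖x‖ ≤ (p : ℝ) ^ (-((n:ℤ) + 1))} := by
  have hp1 : (1 : ℝ) < p := by exact_mod_cast (Fact.out : p.Prime).one_lt
  have hp0 : (0 : ℝ) < p := lt_trans one_pos hp1
  have hppow : ‖((p : ℚ_[p]) ^ n)‖ = (p : ℝ) ^ (-(n:ℤ)) := Padic.norm_p_pow n
  ext x
  simp only [Set.mem_setOf_eq, Set.mem_iUnion, Set.mem_preimage, Finset.mem_range,
    neg_add_eq_sub]
  constructor
  · intro hx
    have hpn : ((p : ℚ_[p]) ^ n) ≠ 0 := by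
      apply pow_ne_zero
      exact_mod_cast (Fact.out : p.Prime).ne_zero
    set y : ℚ_[p] := x / (p : ℚ_[p]) ^ n with hy
    have hyn : ‖y‖ ≤ 1 := by
      rw [hy, norm_div, hppow, div_le_one (by positivity)]
      exact hx
    set Y : ℤ_[p] := ⟨y, hyn⟩ with hY
    refine ⟨Y.appr 1, by simpa using Y.appr_lt 1, ?_⟩
    have hYj : ‖Y - (Y.appr 1 : ℤ_[p])‖ ≤ (p : ℝ) ^ (-((1:ℕ):ℤ)) := by
      rw [PadicInt.norm_le_pow_iff_mem_span_pow]
      simpa using Y.appr_spec 1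
    norm_num at hYj
    have hxy : x = y * (p : ℚ_[p]) ^ n := by
      rw [hy, div_mul_cancel₀ _ hpn]
    have hsub : x - (Y.appr 1 : ℚ_[p]) * (p : ℚ_[p]) ^ n
        = (((Y - (Y.appr 1 : ℤ_[p]) : ℤ_[p]) : ℚ_[p])) * (p : ℚ_[p]) ^ n := by
      push_cast
      rw [hxy]
      ring
    rw [hsub, norm_mul, PadicInt.padic_norm_e_of_padicInt, hppow]
    calc ‖Y - (Y.appr 1 : ℤ_[p])‖ * (p:ℝ) ^ (-(n:ℤ))
        ≤ (p:ℝ)⁻¹ * (p:ℝ) ^ (-(n:ℤ)) :=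
          mul_le_mul_of_nonneg_right hYj (by positivity)
      _ = (p:ℝ) ^ (-((n:ℤ)+1)) := by
          rw [← zpow_neg_one (p:ℝ), ← zpow_add₀ (ne_of_gt hp0)]; ring_nf
  · rintro ⟨j, hj, hxj⟩
    have hc : ‖(j : ℚ_[p]) * (p : ℚ_[p]) ^ n‖ ≤ (p:ℝ) ^ (-(n:ℤ)) := by
      rw [norm_mul, hppow]
      have : ‖(j : ℚ_[p])‖ ≤ 1 := by
        have := Padic.norm_int_le_one (p := p) (j : ℤ)
        push_cast at this
        exact this
      calc ‖(j : ℚ_[p])‖ * (p:ℝ) ^ (-(n:ℤ)) ≤ 1 * (p:ℝ) ^ (-(n:ℤ)) :=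
            mul_le_mul_of_nonneg_right this (by positivity)
        _ = (p:ℝ) ^ (-(n:ℤ)) := one_mul _
    have hstep : (p:ℝ) ^ (-((n:ℤ)+1)) ≤ (p:ℝ) ^ (-(n:ℤ)) := by
      apply zpow_le_zpow_right₀ hp1.le
      omega
    have := Padic.nonarchimedean (x - (j : ℚ_[p]) * (p : ℚ_[p]) ^ n)
      ((j : ℚ_[p]) * (p : ℚ_[p]) ^ n)
    rw [sub_add_cancel] at this
    exact this.trans (max_le (hxj.trans hstep) hc)

lemma ball_measure {p : ℕ} [Fact p.Prime]
    (μ : Measure ℚ_[p]) [μ.IsAddHaarMeasure]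
    (hnorm : μ {x : ℚ_[p] | ‖x‖ ≤ 1} = 1) (n : ℕ) :
    μ {x : ℚ_[p] | ‖x‖ ≤ (p : ℝ) ^ (-(n : ℤ))} = ((p : ENNReal))⁻¹ ^ n := by
  have hp1 : (1 : ℝ) < p := by exact_mod_cast (Fact.out : p.Prime).one_lt
  have hpE0 : ((p : ENNReal)) ≠ 0 := by
    simp [(Fact.out : p.Prime).ne_zero]
  have hpET : ((p : ENNReal)) ≠ ⊤ := ENNReal.natCast_ne_top p
  induction n with
  | zero => simpa using hnorm
  | succ n ih =>
    have hcov := ball_cover (p := p) n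
    have hdisj : (Finset.range p : Set ℕ).Pairwise (Function.onFun Disjoint fun j =>
        (fun x => (-((j : ℚ_[p]) * (p : ℚ_[p]) ^ n)) + x) ⁻¹'
          {x : ℚ_[p] | ‖x‖ ≤ (p : ℝ) ^ (-((n:ℤ) + 1))}) := by
      intro j hj j' hj' hne
      simp only [Finset.coe_range, Set.mem_Iio] at hj hj'
      rw [Function.onFun, Set.disjoint_left]
      rintro x hx hx'
      simp only [Set.mem_preimage, Set.mem_setOf_eq, neg_add_eq_sub] at hx hx'
      have hdiff : ‖((j : ℚ_[p]) - (j' : ℚ_[p])) * (p : ℚ_[p]) ^ n‖ ≤ (p:ℝ) ^ (-((n:ℤ)+1)) := by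
        have h1 : (j : ℚ_[p]) * (p : ℚ_[p]) ^ n - (j' : ℚ_[p]) * (p : ℚ_[p]) ^ n
            = (x - (j' : ℚ_[p]) * (p : ℚ_[p]) ^ n) - (x - (j : ℚ_[p]) * (p : ℚ_[p]) ^ n) := by
          ring
        rw [sub_mul, h1, sub_eq_add_neg]
        refine (Padic.nonarchimedean _ _).trans (max_le hx' ?_)
        rw [norm_neg]; exact hx
      have hnorm1 : ‖((j : ℚ_[p]) - (j' : ℚ_[p]))‖ = 1 := by
        have hle : ‖(((j:ℤ) - (j':ℤ) : ℤ) : ℚ_[p])‖ ≤ 1 := Padic.norm_int_le_one _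
        have hlt : ¬ ‖(((j:ℤ) - (j':ℤ) : ℤ) : ℚ_[p])‖ < 1 := by
          rw [Padic.norm_intCast_lt_one_iff]
          intro hdvd
          have h0 := Int.eq_zero_of_abs_lt_dvd hdvd (by
            rw [abs_sub_lt_iff]
            constructor <;> omega)
          omega
        have : ‖(((j:ℤ) - (j':ℤ) : ℤ) : ℚ_[p])‖ = 1 := le_antisymm hle (not_lt.mp hlt)
        push_cast at this
        exact this
      rw [norm_mul, hnorm1, one_mul, Padic.norm_p_pow] at hdiff
      have : (p:ℝ) ^ (-((n:ℤ)+1)) < (p:ℝ) ^ (-(n:ℤ)) := by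
        apply zpow_lt_zpow_right₀ hp1
        omega
      exact absurd (hdiff.trans_lt this) (lt_irrefl _)
    have hmeasT : ∀ j : ℕ, MeasurableSet ((fun x => (-((j : ℚ_[p]) * (p : ℚ_[p]) ^ n)) + x) ⁻¹'
        {x : ℚ_[p] | ‖x‖ ≤ (p : ℝ) ^ (-((n:ℤ) + 1))}) := by
      intro j
      exact (ball_meas _).preimage (measurable_const_add _)
    have hsum : μ {x : ℚ_[p] | ‖x‖ ≤ (p : ℝ) ^ (-(n:ℤ))}
        = ∑ j ∈ Finset.range p, μ ((fun x => (-((j : ℚ_[p]) * (p : ℚ_[p]) ^ n)) + x) ⁻¹'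
            {x : ℚ_[p] | ‖x‖ ≤ (p : ℝ) ^ (-((n:ℤ) + 1))}) := by
      rw [hcov]
      exact measure_biUnion_finset hdisj (fun j _ => hmeasT j)
    have htrans : ∀ j : ℕ, μ ((fun x => (-((j : ℚ_[p]) * (p : ℚ_[p]) ^ n)) + x) ⁻¹'
        {x : ℚ_[p] | ‖x‖ ≤ (p : ℝ) ^ (-((n:ℤ) + 1))})
        = μ {x : ℚ_[p] | ‖x‖ ≤ (p : ℝ) ^ (-((n:ℤ) + 1))} := fun j =>
      measure_preimage_add μ _ _
    have heq : ((n:ℤ)+1) = ((n+1 : ℕ) : ℤ) := by push_cast; ring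
    rw [ih, Finset.sum_congr rfl (fun j _ => htrans j), Finset.sum_const,
      Finset.card_range] at hsum
    have : μ {x : ℚ_[p] | ‖x‖ ≤ (p : ℝ) ^ (-((n:ℤ)+1))} = ((p : ENNReal))⁻¹ ^ (n+1) := by
      have hps : (p : ENNReal) * (μ {x : ℚ_[p] | ‖x‖ ≤ (p : ℝ) ^ (-((n:ℤ)+1))}) = ((p : ENNReal))⁻¹ ^ n := by
        rw [hsum]
        simp [nsmul_eq_mul]
      calc μ {x : ℚ_[p] | ‖x‖ ≤ (p : ℝ) ^ (-((n:ℤ)+1))}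
          = ((p:ENNReal))⁻¹ * ((p : ENNReal) * μ {x : ℚ_[p] | ‖x‖ ≤ (p : ℝ) ^ (-((n:ℤ)+1))}) := by
            rw [← mul_assoc, ENNReal.inv_mul_cancel hpE0 hpET, one_mul]
        _ = ((p:ENNReal))⁻¹ * ((p : ENNReal))⁻¹ ^ n := by rw [hps]
        _ = ((p:ENNReal))⁻¹ ^ (n+1) := by ring
    simpa [show (-((n+1:ℕ):ℤ)) = -((n:ℤ)+1) by push_cast; ring] using this

theorem stmt18 (p : ℕ) [Fact p.Prime] (hp2 : 2 < p)
    (u : ℤ_[p]) (hu : ‖u‖ = 1) (husq : ¬ ∃ y : ℚ_[p], y ^ 2 = (u : ℚ_[p]))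
    (v : ℤ_[p]) (hv3 : p % 4 = 3 → v = -1) (hv1 : p % 4 = 1 → v = -u)
    (μ : Measure ℚ_[p]) (hμ : μ.IsAddHaarMeasure)
    (hnorm : μ {x : ℚ_[p] | ‖x‖ ≤ 1} = 1) :
    ∀ α : ℚ_[p],
      α ∈ ({-(v : ℚ_[p]), (p : ℚ_[p]), (p : ℚ_[p]) / (u : ℚ_[p])} : Set ℚ_[p]) →
      ∀ k : ℤ, k ≤ 0 →
        ∫ σ in {x : ℚ_[p] | ‖x‖ ≤ (p : ℝ) ^ k}, 1 / ‖1 + α * σ ^ 2‖ ∂μ = (p : ℝ) ^ k := by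
  haveI := hμ
  intro α hα k hk
  have hp1 : (1 : ℝ) < p := by exact_mod_cast (Fact.out : p.Prime).one_lt
  have hple : (p : ℝ) ^ k ≤ 1 := by
    calc (p : ℝ) ^ k ≤ (p : ℝ) ^ (0 : ℤ) := zpow_le_zpow_right₀ hp1.le hk
      _ = 1 := zpow_zero _
  have hEq : Set.EqOn (fun σ : ℚ_[p] => 1 / ‖1 + α * σ ^ 2‖) (fun _ => (1 : ℝ))
      {x : ℚ_[p] | ‖x‖ ≤ (p : ℝ) ^ k} := by
    intro σ hσ
    simp only [Set.mem_setOf_eq] at hσ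
    have := norm_one_aux hp2 u hu husq v hv3 hv1 α hα σ (hσ.trans hple)
    simp [this]
  rw [setIntegral_congr_fun (ball_meas _) hEq]
  rw [setIntegral_const]
  obtain ⟨n, hn⟩ : ∃ n : ℕ, k = -(n : ℤ) := ⟨(-k).toNat, by omega⟩
  subst hn
  rw [measureReal_def, ball_measure μ hnorm n]
  rw [smul_eq_mul, mul_one]
  rw [ENNReal.toReal_pow, ENNReal.toReal_inv, ENNReal.toReal_natCast,
    zpow_neg, inv_pow, zpow_natCast]
end

section
/- Let μ be a Haar measure on the locally compact additive group ℚ_p normalized so that μ(ℤ_p) = 1. Then the integral over all of ℚ_p of the function σ ↦ 1/|1 + α·σ²|_p equals 2 if α ∈ {p, p/u}, and equals 1 + 1/p if α = -v. -/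
open MeasureTheory
open scoped ENNReal

namespace Stmt19Aux

variable {p : ℕ} [hp : Fact p.Prime]

lemma hp1R : (1:ℝ) < p := by exact_mod_cast hp.out.one_lt

lemma hp0R : (0:ℝ) < p := zero_lt_one.trans hp1R

lemma ball_measurable (r : ℝ) : MeasurableSet {x : ℚ_[p] | ‖x‖ ≤ r} :=
  (isClosed_le continuous_norm continuous_const).measurableSet

lemma measure_ball_succ (μ : Measure ℚ_[p]) [μ.IsAddLeftInvariant] (n : ℕ) :
    μ {x : ℚ_[p] | ‖x‖ ≤ (p:ℝ)^(n+1)} = p * μ {x : ℚ_[p] | ‖x‖ ≤ (p:ℝ)^n} := by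
  have hpQ : ((p:ℚ_[p]))^(n+1) ≠ 0 :=
    pow_ne_zero _ (Nat.cast_ne_zero.2 hp.out.ne_zero)
  set c : ℚ_[p] := ((p:ℚ_[p])^(n+1))⁻¹ with hc
  have hcnorm : ‖c‖ = (p:ℝ)^(n+1) := by
    rw [hc, norm_inv, norm_pow, Padic.norm_p, inv_pow, inv_inv]
  set T : Fin p → Set ℚ_[p] :=
    fun j => (fun x => -(((j:ℕ):ℚ_[p]) * c) + x) ⁻¹' {x : ℚ_[p] | ‖x‖ ≤ (p:ℝ)^n} with hT
  have hTmem : ∀ (j : Fin p) (x : ℚ_[p]),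
      x ∈ T j ↔ ‖x - ((j:ℕ):ℚ_[p]) * c‖ ≤ (p:ℝ)^n := by
    intro j x
    simp only [hT, Set.mem_preimage, Set.mem_setOf_eq]
    rw [show -(((j:ℕ):ℚ_[p]) * c) + x = x - ((j:ℕ):ℚ_[p]) * c by ring]
  have hcover : {x : ℚ_[p] | ‖x‖ ≤ (p:ℝ)^(n+1)} = ⋃ j, T j := by
    ext x
    simp only [Set.mem_setOf_eq, Set.mem_iUnion]
    constructor
    · intro hx
      have hy : ‖x * (p:ℚ_[p])^(n+1)‖ ≤ 1 := by
        rw [norm_mul, norm_pow, Padic.norm_p]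
        calc ‖x‖ * ((p:ℝ)⁻¹)^(n+1) ≤ (p:ℝ)^(n+1) * ((p:ℝ)⁻¹)^(n+1) :=
              mul_le_mul_of_nonneg_right hx (by positivity)
        _ = 1 := by rw [← mul_pow, mul_inv_cancel₀ (ne_of_gt hp0R), one_pow]
      set z : ℤ_[p] := ⟨x * (p:ℚ_[p])^(n+1), hy⟩ with hz
      have hjlt : z.appr 1 < p := by simpa using z.appr_lt 1
      refine ⟨⟨z.appr 1, hjlt⟩, ?_⟩
      rw [hTmem]
      have hspec : ‖z - ((z.appr 1 : ℕ) : ℤ_[p])‖ ≤ (p:ℝ)^(-(1:ℕ):ℤ) :=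
        (PadicInt.norm_le_pow_iff_mem_span_pow _ 1).2 (z.appr_spec 1)
      have hspec' : ‖x * (p:ℚ_[p])^(n+1) - ((z.appr 1 : ℕ) : ℚ_[p])‖ ≤ (p:ℝ)⁻¹ := by
        have hcoe : ((z - ((z.appr 1 : ℕ) : ℤ_[p]) : ℤ_[p]) : ℚ_[p])
            = x * (p:ℚ_[p])^(n+1) - ((z.appr 1 : ℕ) : ℚ_[p]) := by
          push_cast [hz]
          rfl
        rw [PadicInt.norm_def, hcoe] at hspec
        simpa using hspec
      have hxe : x - ((z.appr 1 : ℕ):ℚ_[p]) * c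
          = (x * (p:ℚ_[p])^(n+1) - ((z.appr 1 : ℕ):ℚ_[p])) * c := by
        rw [hc]; field_simp
      rw [hxe, norm_mul, hcnorm]
      calc ‖x * (p:ℚ_[p])^(n+1) - ((z.appr 1 : ℕ):ℚ_[p])‖ * (p:ℝ)^(n+1)
          ≤ (p:ℝ)⁻¹ * (p:ℝ)^(n+1) := mul_le_mul_of_nonneg_right hspec' (by positivity)
        _ = (p:ℝ)^n := by
            rw [pow_succ, mul_comm, mul_inv_cancel_right₀ (hp0R (p := p)).ne']
    · rintro ⟨j, hj⟩
      rw [hTmem] at hj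
      have hjc : ‖((j:ℕ):ℚ_[p]) * c‖ ≤ (p:ℝ)^(n+1) := by
        rw [norm_mul, hcnorm]
        have : ‖((j:ℕ):ℚ_[p])‖ ≤ 1 := by
          have := Padic.norm_int_le_one (p := p) (j : ℕ)
          simpa using this
        nlinarith [pow_pos (hp0R (p := p)) (n+1)]
      have := Padic.nonarchimedean (x - ((j:ℕ):ℚ_[p]) * c) (((j:ℕ):ℚ_[p]) * c)
      simp only [sub_add_cancel] at this
      refine le_trans this (max_le (le_trans hj ?_) hjc)
      exact pow_le_pow_right₀ hp1R.le (Nat.le_succ n)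
  have hdisj : Pairwise (Function.onFun Disjoint T) := by
    intro i j hij
    refine Set.disjoint_left.2 fun x hxi hxj => ?_
    rw [hTmem] at hxi hxj
    have hsub : ‖(((i:ℕ):ℚ_[p]) - ((j:ℕ):ℚ_[p])) * c‖ ≤ (p:ℝ)^n := by
      have h1 : (((i:ℕ):ℚ_[p]) - ((j:ℕ):ℚ_[p])) * c
          = (x - ((j:ℕ):ℚ_[p]) * c) + -(x - ((i:ℕ):ℚ_[p]) * c) := by ring
      rw [h1]
      refine le_trans (Padic.nonarchimedean _ _) (max_le hxj ?_)
      rw [norm_neg]; exact hxi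
    rw [norm_mul, hcnorm] at hsub
    have hle : ‖(((i:ℕ):ℚ_[p]) - ((j:ℕ):ℚ_[p]))‖ ≤ (p:ℝ)⁻¹ := by
      have hpow : (0:ℝ) < (p:ℝ)^(n+1) := pow_pos hp0R _
      rw [← le_div_iff₀ hpow] at hsub
      refine le_trans hsub (le_of_eq ?_)
      rw [pow_succ, div_mul_eq_div_div, div_self (ne_of_gt (pow_pos hp0R n)), one_div]
    have hnormij : ‖((((i:ℕ):ℤ) - ((j:ℕ):ℤ) : ℤ):ℚ_[p])‖ ≤ (p:ℝ)^(-((1:ℕ):ℤ)) := by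
      push_cast
      simpa using hle
    have hdvd : ((p:ℤ))^1 ∣ (((i:ℕ):ℤ) - ((j:ℕ):ℤ)) :=
      (Padic.norm_int_le_pow_iff_dvd _ 1).1 hnormij
    rw [pow_one] at hdvd
    have hiv : (i:ℕ) < p := i.2
    have hjv : (j:ℕ) < p := j.2
    have hij' : (i:ℕ) ≠ (j:ℕ) := fun h => hij (Fin.ext h)
    have h2 : p ∣ (((i:ℕ):ℤ) - ((j:ℕ):ℤ)).natAbs := by
      have := Int.natAbs_dvd_natAbs.2 hdvd
      simpa using this
    have h3 : (((i:ℕ):ℤ) - ((j:ℕ):ℤ)).natAbs = 0 :=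
      Nat.eq_zero_of_dvd_of_lt h2 (by omega)
    omega
  have hTmeas : ∀ j, MeasurableSet (T j) :=
    fun j => (ball_measurable _).preimage (measurable_const_add _)
  calc μ {x : ℚ_[p] | ‖x‖ ≤ (p:ℝ)^(n+1)} = μ (⋃ j, T j) := by rw [hcover]
    _ = ∑' j : Fin p, μ (T j) := measure_iUnion hdisj hTmeas
    _ = ∑' j : Fin p, μ {x : ℚ_[p] | ‖x‖ ≤ (p:ℝ)^n} := by
        refine tsum_congr fun j => ?_
        exact measure_preimage_add μ _ _
    _ = p * μ {x : ℚ_[p] | ‖x‖ ≤ (p:ℝ)^n} := by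
        rw [tsum_fintype]
        simp [Finset.sum_const, Finset.card_univ, nsmul_eq_mul]

lemma measure_ball_nat (μ : Measure ℚ_[p]) [μ.IsAddLeftInvariant]
    (hnorm : μ {x : ℚ_[p] | ‖x‖ ≤ 1} = 1) (n : ℕ) :
    μ {x : ℚ_[p] | ‖x‖ ≤ (p:ℝ)^n} = (p:ℝ≥0∞)^n := by
  induction n with
  | zero => simpa using hnorm
  | succ k ih => rw [measure_ball_succ, ih, pow_succ]; ring

lemma norm_one_add_of_big {x : ℚ_[p]} (h : 1 < ‖x‖) : ‖1 + x‖ = ‖x‖ := by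
  rw [Padic.add_eq_max_of_ne (by rw [norm_one]; exact ne_of_lt h), norm_one,
    max_eq_right h.le]

lemma norm_one_add_of_small {x : ℚ_[p]} (h : ‖x‖ < 1) : ‖1 + x‖ = 1 := by
  rw [Padic.add_eq_max_of_ne (by rw [norm_one]; exact (ne_of_lt h).symm), norm_one,
    max_eq_left h.le]

lemma norm_eq_of_mem_shell {x : ℚ_[p]} {n : ℕ} (h1 : ‖x‖ ≤ (p:ℝ)^(n+1))
    (h2 : ¬ ‖x‖ ≤ (p:ℝ)^n) : ‖x‖ = (p:ℝ)^(n+1) := by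
  refine le_antisymm h1 ?_
  have hz : ¬ ‖x‖ < (p:ℝ)^((n:ℤ)+1) := by
    rw [← Padic.norm_le_pow_iff_norm_lt_pow_add_one]
    simpa [zpow_natCast] using h2
  have : (p:ℝ)^((n:ℤ)+1) ≤ ‖x‖ := not_lt.1 hz
  calc (p:ℝ)^(n+1) = (p:ℝ)^(((n+1:ℕ)):ℤ) := (zpow_natCast _ _).symm
    _ = (p:ℝ)^((n:ℤ)+1) := by push_cast; ring_nf
    _ ≤ ‖x‖ := this

lemma hshell_of_norm_inv {α : ℚ_[p]} (hα : ‖α‖ = (p:ℝ)⁻¹) (n : ℕ) (σ : ℚ_[p])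
    (hσ : ‖σ‖ = (p:ℝ)^(n+1)) : ‖1 + α * σ ^ 2‖ = (p:ℝ)^(2*n+1) := by
  have hval : ‖α * σ ^ 2‖ = (p:ℝ)^(2*n+1) := by
    rw [norm_mul, norm_pow, hα, hσ]
    rw [← pow_mul]
    rw [show (n+1)*2 = 2*n+1+1 by ring, pow_succ]
    rw [mul_comm, mul_inv_cancel_right₀ (hp0R (p := p)).ne']
  rw [norm_one_add_of_big (by rw [hval]; exact one_lt_pow₀ hp1R (by omega)), hval]

lemma hshell_of_norm_one {α : ℚ_[p]} (hα : ‖α‖ = 1) (n : ℕ) (σ : ℚ_[p])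
    (hσ : ‖σ‖ = (p:ℝ)^(n+1)) : ‖1 + α * σ ^ 2‖ = (p:ℝ)^(2*n+2) := by
  have hval : ‖α * σ ^ 2‖ = (p:ℝ)^(2*n+2) := by
    rw [norm_mul, norm_pow, hα, hσ, one_mul, ← pow_mul]
    ring_nf
  rw [norm_one_add_of_big (by rw [hval]; exact one_lt_pow₀ hp1R (by omega)), hval]

lemma h0_of_norm_inv {α : ℚ_[p]} (hα : ‖α‖ = (p:ℝ)⁻¹) (σ : ℚ_[p]) (hσ : ‖σ‖ ≤ 1) :
    ‖1 + α * σ ^ 2‖ = 1 := by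
  refine norm_one_add_of_small ?_
  rw [norm_mul, norm_pow, hα]
  have h1 : ‖σ‖^2 ≤ 1 := pow_le_one₀ (norm_nonneg _) hσ
  have h2 : (p:ℝ)⁻¹ < 1 := by
    rw [inv_lt_one_iff₀]; right; exact hp1R
  nlinarith [inv_pos.2 (hp0R (p := p))]

lemma key (μ : Measure ℚ_[p]) (hμ : μ.IsAddHaarMeasure)
    (hnorm : μ {x : ℚ_[p] | ‖x‖ ≤ 1} = 1) (α : ℚ_[p]) (e : ℕ → ℕ) (c : ℝ) (hc : 0 ≤ c)
    (h0 : ∀ σ : ℚ_[p], ‖σ‖ ≤ 1 → ‖1 + α * σ ^ 2‖ = 1)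
    (hshell : ∀ (n : ℕ) (σ : ℚ_[p]), ‖σ‖ = (p:ℝ)^(n+1) → ‖1 + α * σ ^ 2‖ = (p:ℝ)^(e n))
    (hsummable : Summable (fun n : ℕ => ((p:ℝ)^(e n))⁻¹ * ((p:ℝ)^(n+1) - (p:ℝ)^n)))
    (hsum : ∑' n : ℕ, ((p:ℝ)^(e n))⁻¹ * ((p:ℝ)^(n+1) - (p:ℝ)^n) = c) :
    ∫ σ, 1 / ‖1 + α * σ ^ 2‖ ∂μ = 1 + c := by
  haveI := hμ
  set f : ℚ_[p] → ℝ := fun σ => 1 / ‖1 + α * σ ^ 2‖ with hf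
  have hcont : Continuous fun σ : ℚ_[p] => ‖1 + α * σ ^ 2‖ :=
    (continuous_const.add (continuous_const.mul (continuous_id.pow 2))).norm
  have hmf : Measurable f := measurable_const.div hcont.measurable
  have hf0 : ∀ σ, 0 ≤ f σ := fun σ => by
    simp only [hf]; positivity
  rw [hf, integral_eq_lintegral_of_nonneg_ae (Filter.Eventually.of_forall hf0)
    hmf.aestronglyMeasurable]
  set B : ℕ → Set ℚ_[p] := fun n => {x | ‖x‖ ≤ (p:ℝ)^n} with hB
  have hBm : ∀ n, MeasurableSet (B n) := fun n => ball_measurable _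
  have hBmono : ∀ {m n : ℕ}, m ≤ n → B m ⊆ B n := by
    intro m n h x hx
    exact le_trans hx (pow_le_pow_right₀ hp1R.le h)
  set s : ℕ → Set ℚ_[p] := fun n => Nat.casesOn n (B 0) (fun m => B (m+1) \ B m) with hs
  have hsm : ∀ n, MeasurableSet (s n) := by
    rintro (_|n)
    · exact hBm 0
    · exact (hBm _).diff (hBm _)
  have hsub : ∀ n, s n ⊆ B n := by
    rintro (_|n)
    · exact subset_rfl
    · exact Set.diff_subset
  have hdisj : Pairwise (Function.onFun Disjoint s) := by
    have haux : ∀ m n, m < n → Disjoint (s m) (s n) := by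
      intro m n hmn
      obtain ⟨k, rfl⟩ : ∃ k, n = k + 1 := ⟨n-1, by omega⟩
      refine Set.disjoint_left.2 fun x hxm hxn => ?_
      exact hxn.2 (hBmono (by omega) (hsub m hxm))
    intro m n hmn
    rcases hmn.lt_or_gt with h|h
    exacts [haux _ _ h, (haux _ _ h).symm]
  have hU : ⋃ n, s n = Set.univ := by
    refine Set.eq_univ_of_forall fun x => ?_
    obtain ⟨N, hN⟩ := pow_unbounded_of_one_lt ‖x‖ (hp1R (p := p))
    have hxB : x ∈ B N := le_of_lt hN
    clear hN
    induction N with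
    | zero => exact Set.mem_iUnion.2 ⟨0, hxB⟩
    | succ k ih =>
      by_cases hk : x ∈ B k
      · exact ih hk
      · exact Set.mem_iUnion.2 ⟨k+1, ⟨hxB, hk⟩⟩
  have hmB : ∀ n, μ (B n) = (p:ℝ≥0∞)^n := fun n => measure_ball_nat μ hnorm n
  have hL : ∫⁻ σ, ENNReal.ofReal (f σ) ∂μ = ∑' n, ∫⁻ σ in s n, ENNReal.ofReal (f σ) ∂μ := by
    rw [← lintegral_iUnion hsm hdisj, hU, Measure.restrict_univ]
  set T : ℕ → ℝ :=
    fun n => Nat.casesOn n 1 (fun m => ((p:ℝ)^(e m))⁻¹ * ((p:ℝ)^(m+1) - (p:ℝ)^m)) with hTdef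
  have hT0 : ∀ n, 0 ≤ T n := by
    rintro (_|n)
    · exact zero_le_one
    · have h1 : (p:ℝ)^(n+1) - (p:ℝ)^n ≥ 0 :=
        sub_nonneg.2 (pow_le_pow_right₀ hp1R.le (Nat.le_succ n))
      have h2 : (0:ℝ) < (p:ℝ)^(e n) := pow_pos hp0R _
      have : (0:ℝ) ≤ ((p:ℝ)^(e n))⁻¹ := le_of_lt (inv_pos.2 h2)
      exact mul_nonneg this h1
  have hterm : ∀ n, ∫⁻ σ in s n, ENNReal.ofReal (f σ) ∂μ = ENNReal.ofReal (T n) := by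
    rintro (_|n)
    · have hfx : ∀ x, x ∈ s 0 → ENNReal.ofReal (f x) = ((1:ℝ≥0∞)) := by
        intro x hx
        have hx' : ‖x‖ ≤ (p:ℝ)^0 := hx
        have hx1 : ‖x‖ ≤ 1 := by simpa using hx'
        rw [hf]
        simp only [h0 x hx1, one_div_one, ENNReal.ofReal_one]
      rw [setLIntegral_congr_fun (hsm 0) hfx,
        setLIntegral_const, one_mul]
      have hs0 : μ (s 0) = 1 := by
        show μ (B 0) = 1
        simpa [hB] using hnorm
      rw [hs0]
      show (1:ℝ≥0∞) = ENNReal.ofReal 1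
      rw [ENNReal.ofReal_one]
    · have hms : μ (s (n+1)) = ENNReal.ofReal ((p:ℝ)^(n+1) - (p:ℝ)^n) := by
        show μ (B (n+1) \ B n) = _
        rw [measure_diff (hBmono (Nat.le_succ n)) (hBm n).nullMeasurableSet
          (by rw [hmB]; exact ENNReal.pow_ne_top (ENNReal.natCast_ne_top p)),
          hmB, hmB]
        have hcast : ∀ k : ℕ, ((p:ℝ≥0∞))^k = ENNReal.ofReal ((p:ℝ)^k) := by
          intro k
          rw [ENNReal.ofReal_pow hp0R.le, ENNReal.ofReal_natCast]
        rw [hcast, hcast, ← ENNReal.ofReal_sub _ (by positivity)]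
      have hfx : ∀ x, x ∈ s (n+1) → ENNReal.ofReal (f x) = ENNReal.ofReal (((p:ℝ)^(e n))⁻¹) := by
        intro x hx
        have hxmem : x ∈ B (n+1) \ B n := hx
        have hx2 : ¬ ‖x‖ ≤ (p:ℝ)^n := hxmem.2
        have hxn : ‖x‖ = (p:ℝ)^(n+1) := norm_eq_of_mem_shell hxmem.1 hx2
        rw [hf]
        simp only [hshell n x hxn, one_div]
      rw [setLIntegral_congr_fun (hsm (n+1)) hfx,
        setLIntegral_const, hms, ← ENNReal.ofReal_mul (by positivity)]
  have hTsummable : Summable T := (summable_nat_add_iff 1).1 hsummable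
  have hTsum : ∑' n, T n = 1 + c := by
    rw [hTsummable.tsum_eq_zero_add]
    have : ∑' n : ℕ, T (n+1) = c := hsum
    rw [this]
    rfl
  rw [hL, tsum_congr hterm, ← ENNReal.ofReal_tsum_of_nonneg hT0 hTsummable, hTsum,
    ENNReal.toReal_ofReal (by linarith)]


lemma toZMod_p_eq_zero : PadicInt.toZMod ((p:ℤ_[p])) = 0 := by
  rw [map_natCast, ZMod.natCast_self]

lemma toZMod_eq_zero_of_dvd {z : ℤ_[p]} (h : (p:ℤ_[p]) ∣ z) : PadicInt.toZMod z = 0 := by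
  obtain ⟨k, hk⟩ := h
  rw [hk, map_mul, toZMod_p_eq_zero, zero_mul]

lemma norm_lt_one_of_toZMod_eq_zero {z : ℤ_[p]} (h : PadicInt.toZMod z = 0) : ‖z‖ < 1 := by
  rw [PadicInt.norm_lt_one_iff_dvd, ← Ideal.mem_span_singleton,
    ← PadicInt.maximalIdeal_eq_span_p, ← PadicInt.ker_toZMod]
  exact h

lemma norm_one_of_toZMod_ne_zero {z : ℤ_[p]} (h : PadicInt.toZMod z ≠ 0) : ‖z‖ = 1 := by
  rcases lt_or_eq_of_le (PadicInt.norm_le_one z) with hlt | heq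
  · exact absurd (toZMod_eq_zero_of_dvd ((PadicInt.norm_lt_one_iff_dvd z).1 hlt)) h
  · exact heq

lemma exists_sq_of_residue (hp2 : 2 < p) (z : ℤ_[p]) (w : ZMod p) (hw : w ≠ 0)
    (hwz : w^2 = PadicInt.toZMod z) : ∃ y : ℤ_[p], y^2 = z := by
  set a : ℤ_[p] := ((w.val : ℕ) : ℤ_[p]) with ha
  have haz : PadicInt.toZMod a = w := by
    rw [ha, map_natCast, ZMod.natCast_val, ZMod.cast_id]
  set F : Polynomial ℤ_[p] := Polynomial.X^2 - Polynomial.C z with hF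
  have heval : F.eval a = a^2 - z := by simp [hF]
  have hde : F.derivative.eval a = 2*a := by
    simp [hF, Polynomial.derivative_X_pow]
    exact Or.inl one_add_one_eq_two
  have h2a : PadicInt.toZMod (2*a) ≠ 0 := by
    rw [map_mul, haz]
    refine mul_ne_zero ?_ hw
    have : ((2:ℕ) : ZMod p) ≠ 0 := by
      rw [Ne, ZMod.natCast_eq_zero_iff]
      intro h
      have := Nat.le_of_dvd (by norm_num) h
      omega
    rw [show (2:ℤ_[p]) = ((2:ℕ):ℤ_[p]) by norm_num, map_natCast]
    exact this
  have hdnorm : ‖F.derivative.eval a‖ = 1 := by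
    rw [hde]; exact norm_one_of_toZMod_ne_zero h2a
  have hFa : ‖F.eval a‖ < 1 := by
    rw [heval]
    refine norm_lt_one_of_toZMod_eq_zero ?_
    rw [map_sub, map_pow, haz, hwz, sub_self]
  have hhyp : ‖F.eval a‖ < ‖F.derivative.eval a‖^2 := by
    rw [hdnorm, one_pow]; exact hFa
  obtain ⟨y, hy, -⟩ := hensels_lemma hhyp
  refine ⟨y, ?_⟩
  have : y^2 - z = 0 := by simpa [hF] using hy
  exact sub_eq_zero.1 this

lemma norm_one_sub_v_mul_sq (hp2 : 2 < p) (u : ℤ_[p]) (hu : ‖u‖ = 1)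
    (husq : ¬ ∃ y : ℚ_[p], y ^ 2 = (u : ℚ_[p])) (v : ℤ_[p])
    (hv3 : p % 4 = 3 → v = -1) (hv1 : p % 4 = 1 → v = -u)
    (s : ℤ_[p]) : ‖1 - v * s^2‖ = 1 := by
  by_contra h
  have hlt : ‖1 - v*s^2‖ < 1 := lt_of_le_of_ne (PadicInt.norm_le_one _) h
  have hz : PadicInt.toZMod (1 - v*s^2) = 0 := by
    by_contra hz
    exact absurd (norm_one_of_toZMod_ne_zero hz) h
  have heq : (1 : ZMod p) - PadicInt.toZMod v * (PadicInt.toZMod s)^2 = 0 := by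
    simpa [map_sub, map_mul, map_pow] using hz
  have hs0 : PadicInt.toZMod s ≠ 0 := by
    intro h0
    rw [h0] at heq
    simp at heq
  have hu0 : PadicInt.toZMod u ≠ 0 := by
    intro h0
    have := norm_lt_one_of_toZMod_eq_zero h0
    rw [hu] at this
    exact lt_irrefl _ this
  have hodd : p % 2 = 1 := Nat.odd_iff.1 (hp.out.odd_of_ne_two (by omega))
  have h4 : p % 4 = 1 ∨ p % 4 = 3 := by omega
  rcases h4 with h1 | h3
  · -- v = -u, so 1 + ū s̄² = 0, hence ū is a square mod p
    rw [hv1 h1] at heq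
    rw [map_neg] at heq
    obtain ⟨t, ht⟩ := ZMod.exists_sq_eq_neg_one_iff.2 (by omega : p % 4 ≠ 3)
    -- ht : -1 = t * t
    have hus : PadicInt.toZMod u * (PadicInt.toZMod s)^2 = -1 := by
      linear_combination heq
    have hs2 : (PadicInt.toZMod s)^2 ≠ 0 := pow_ne_zero _ hs0
    have hueq : (t * (PadicInt.toZMod s)⁻¹)^2 = PadicInt.toZMod u := by
      have hcalc : (t * (PadicInt.toZMod s)⁻¹)^2 * ((PadicInt.toZMod s)^2)
          = PadicInt.toZMod u * ((PadicInt.toZMod s)^2) := by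
        have hr : (t * (PadicInt.toZMod s)⁻¹)^2 * ((PadicInt.toZMod s)^2)
            = (t*t) * ((PadicInt.toZMod s)⁻¹ * PadicInt.toZMod s)^2 := by ring
        rw [hr, inv_mul_cancel₀ hs0, one_pow, mul_one, hus, ← ht]
      exact mul_right_cancel₀ hs2 hcalc
    have hw0 : t * (PadicInt.toZMod s)⁻¹ ≠ 0 := by
      intro h0
      rw [h0] at hueq
      simp at hueq
      exact hu0 hueq.symm
    obtain ⟨y, hy⟩ := exists_sq_of_residue hp2 u _ hw0 hueq
    exact husq ⟨(y : ℚ_[p]), by exact_mod_cast congrArg (fun t : ℤ_[p] => (t : ℚ_[p])) hy⟩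
  · -- v = -1 so s̄² = -1
    rw [hv3 h3] at heq
    rw [map_neg, map_one] at heq
    have : IsSquare (-1 : ZMod p) := ⟨PadicInt.toZMod s, by linear_combination -heq⟩
    exact absurd (ZMod.exists_sq_eq_neg_one_iff.1 this) (by omega)

end Stmt19Aux

open Stmt19Aux in
theorem stmt19 (p : ℕ) [Fact p.Prime] (hp2 : 2 < p)
    (u : ℤ_[p]) (hu : ‖u‖ = 1) (husq : ¬ ∃ y : ℚ_[p], y ^ 2 = (u : ℚ_[p]))
    (v : ℤ_[p]) (hv3 : p % 4 = 3 → v = -1) (hv1 : p % 4 = 1 → v = -u)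
    (μ : Measure ℚ_[p]) (hμ : μ.IsAddHaarMeasure)
    (hnorm : μ {x : ℚ_[p] | ‖x‖ ≤ 1} = 1) :
    (∀ α : ℚ_[p],
      α ∈ ({(p : ℚ_[p]), (p : ℚ_[p]) / (u : ℚ_[p])} : Set ℚ_[p]) →
      ∫ σ, 1 / ‖1 + α * σ ^ 2‖ ∂μ = 2) ∧
    ∫ σ, 1 / ‖1 + (-(v : ℚ_[p])) * σ ^ 2‖ ∂μ = 1 + 1 / (p : ℝ) := by
  have hp := ‹Fact p.Prime›
  have hp0 : (0:ℝ) < p := hp0R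
  have hp1 : (1:ℝ) < p := hp1R
  have hr0 : (0:ℝ) ≤ 1/(p:ℝ) := by positivity
  have hr1 : 1/(p:ℝ) < 1 := by rw [div_lt_one hp0]; exact hp1
  have hne : (1:ℝ) - 1/(p:ℝ) ≠ 0 := ne_of_gt (by linarith)
  have hpne : (p:ℝ) ≠ 0 := ne_of_gt hp0
  constructor
  · intro α hα
    have hαn : ‖α‖ = (p:ℝ)⁻¹ := by
      rcases hα with rfl | hα
      · exact Padic.norm_p
      · rw [Set.mem_singleton_iff] at hα
        subst hα
        rw [norm_div, Padic.norm_p, ← PadicInt.norm_def, hu, div_one]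
    have hs : ∀ n : ℕ, ((p:ℝ)^(2*n+1))⁻¹ * ((p:ℝ)^(n+1) - (p:ℝ)^n)
        = (1 - 1/(p:ℝ)) * (1/(p:ℝ))^n := by
      intro n
      rw [one_div, inv_pow]
      field_simp
      ring
    have hsummable : Summable
        (fun n : ℕ => ((p:ℝ)^(2*n+1))⁻¹ * ((p:ℝ)^(n+1) - (p:ℝ)^n)) :=
      (((summable_geometric_of_lt_one hr0 hr1).mul_left (1 - 1/(p:ℝ)))).congr
        fun n => (hs n).symm
    have hsum : ∑' n : ℕ, ((p:ℝ)^(2*n+1))⁻¹ * ((p:ℝ)^(n+1) - (p:ℝ)^n) = 1 := by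
      rw [tsum_congr hs, tsum_mul_left, tsum_geometric_of_lt_one hr0 hr1,
        mul_inv_cancel₀ hne]
    have := key μ hμ hnorm α (fun n => 2*n+1) 1 zero_le_one
      (fun σ hσ => h0_of_norm_inv hαn σ hσ)
      (fun n σ hσ => hshell_of_norm_inv hαn n σ hσ) hsummable hsum
    rw [this]
    norm_num
  · have hαn : ‖(-(v:ℚ_[p]))‖ = 1 := by
      rw [norm_neg, ← PadicInt.norm_def]
      have hodd : p % 2 = 1 := Nat.odd_iff.1 (hp.out.odd_of_ne_two (by omega))
      have h4 : p % 4 = 1 ∨ p % 4 = 3 := by omega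
      rcases h4 with h1 | h3
      · rw [hv1 h1, norm_neg, hu]
      · rw [hv3 h3, norm_neg, norm_one]
    have h0 : ∀ σ : ℚ_[p], ‖σ‖ ≤ 1 → ‖1 + (-(v:ℚ_[p])) * σ ^ 2‖ = 1 := by
      intro σ hσ
      set sZ : ℤ_[p] := ⟨σ, hσ⟩ with hsZ
      have hcoe : ((1 - v * sZ^2 : ℤ_[p]) : ℚ_[p]) = 1 + (-(v:ℚ_[p])) * σ ^ 2 := by
        push_cast
        ring
      rw [← hcoe, ← PadicInt.norm_def]
      exact norm_one_sub_v_mul_sq hp2 u hu husq v hv3 hv1 sZ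
    have hs : ∀ n : ℕ, ((p:ℝ)^(2*n+2))⁻¹ * ((p:ℝ)^(n+1) - (p:ℝ)^n)
        = ((1 - 1/(p:ℝ)) * (1/(p:ℝ))) * (1/(p:ℝ))^n := by
      intro n
      rw [one_div, inv_pow]
      field_simp
      ring
    have hsummable : Summable
        (fun n : ℕ => ((p:ℝ)^(2*n+2))⁻¹ * ((p:ℝ)^(n+1) - (p:ℝ)^n)) :=
      (((summable_geometric_of_lt_one hr0 hr1).mul_left _)).congr fun n => (hs n).symm
    have hsum : ∑' n : ℕ, ((p:ℝ)^(2*n+2))⁻¹ * ((p:ℝ)^(n+1) - (p:ℝ)^n) = 1/(p:ℝ) := by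
      rw [tsum_congr hs, tsum_mul_left, tsum_geometric_of_lt_one hr0 hr1,
        show ((1 - 1/(p:ℝ)) * (1/(p:ℝ))) * (1 - 1/(p:ℝ))⁻¹
          = (1/(p:ℝ)) * ((1 - 1/(p:ℝ)) * (1 - 1/(p:ℝ))⁻¹) by ring,
        mul_inv_cancel₀ hne, mul_one]
    exact key μ hμ hnorm (-(v:ℚ_[p])) (fun n => 2*n+2) (1/(p:ℝ)) hr0 h0
      (fun n σ hσ => hshell_of_norm_one hαn n σ hσ) hsummable hsum
end
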